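/- There exist four deterministic online algorithms A₁, A₂, A₃, A₄ for RemKnap such that for every instance l one has OPT(l) ≤ (4/3) · max_{1≤j≤4} gain(A_j, l). That is, there is a strictly 4/3-competitive online algorithm for the proportional removable knapsack problem reading two advice bits. -/

import Mathlib

/-- An instance of RemKnap: a list of item sizes, each in (0,1]. -/
def ValidInstance (l : List ℝ) : Prop := ∀ s ∈ l, 0 < s ∧ s ≤ 1

/-- A deterministic online algorithm for the removable knapsack problem:
it assigns to each instance a packing (set of 0-based item indices) that
respects the capacity, and on arrival of a new item it may only remove
previously packed items and add the new item. -/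
structure OnlineAlg where
  pack : List ℝ → Finset ℕ
  pack_subset : ∀ l : List ℝ, ValidInstance l → pack l ⊆ Finset.range l.length
  pack_capacity : ∀ l : List ℝ, ValidInstance l → (∑ i ∈ pack l, l.getD i 0) ≤ 1
  pack_online : ∀ (l : List ℝ) (x : ℝ), ValidInstance (l ++ [x]) →
    pack (l ++ [x]) ⊆ pack l ∪ {l.length}

/-- The gain of an online algorithm on an instance: the total size of its final packing. -/
noncomputable def gain (A : OnlineAlg) (l : List ℝ) : ℝ := ∑ i ∈ A.pack l, l.getD i 0

/-- The optimal (offline) value of an instance: the largest total size of a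
subset of the items that does not exceed the capacity 1. -/
noncomputable def OPT (l : List ℝ) : ℝ :=
  ((Finset.range l.length).powerset.filter fun P => (∑ i ∈ P, l.getD i 0) ≤ 1).sup'
    ⟨∅, by simp⟩ (fun P => ∑ i ∈ P, l.getD i 0)

namespace RK
open Classical Finset

noncomputable section

def vl (l : List ℝ) (i : ℕ) : ℝ := l.getD i 0
def sm (l : List ℝ) (P : Finset ℕ) : ℝ := ∑ i ∈ P, vl l i
def isT (x : ℝ) : Prop := x ≤ 1/4
def isN (x : ℝ) : Prop := 1/4 < x ∧ x ≤ 1/2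
def isL (x : ℝ) : Prop := 1/2 < x
noncomputable def Cix (p : ℝ → Prop) (l : List ℝ) : Finset ℕ :=
  (range l.length).filter fun i => p (vl l i)

lemma vl_app {l : List ℝ} {i : ℕ} (h : i < l.length) (x : ℝ) :
    vl (l ++ [x]) i = vl l i := by
  simp [vl, List.getD, List.getElem?_append_left h]

lemma vl_app_len (l : List ℝ) (x : ℝ) : vl (l ++ [x]) l.length = x := by
  simp [vl, List.getD]

lemma sm_app {l : List ℝ} {P : Finset ℕ} (h : P ⊆ range l.length) (x : ℝ) :
    sm (l ++ [x]) P = sm l P := by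
  refine Finset.sum_congr rfl fun i hi => ?_
  exact vl_app (mem_range.mp (h hi)) x

lemma mem_Cix {p : ℝ → Prop} {l : List ℝ} {i : ℕ} :
    i ∈ Cix p l ↔ i < l.length ∧ p (vl l i) := by
  simp [Cix]

lemma mem_Cix_app {p : ℝ → Prop} {l : List ℝ} {x : ℝ} {i : ℕ} :
    i ∈ Cix p (l ++ [x]) ↔ i ∈ Cix p l ∨ (i = l.length ∧ p x) := by
  simp only [mem_Cix, List.length_append, List.length_cons, List.length_nil]
  constructor
  · rintro ⟨hi, hp⟩
    rcases lt_or_eq_of_le (Nat.lt_succ_iff.mp (by simpa using hi)) with h | h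
    · exact Or.inl ⟨h, by rwa [vl_app h x] at hp⟩
    · exact Or.inr ⟨h, by rwa [h, vl_app_len] at hp⟩
  · rintro (⟨hi, hp⟩ | ⟨rfl, hp⟩)
    · exact ⟨by omega, by rwa [vl_app hi x]⟩
    · exact ⟨by omega, by rwa [vl_app_len]⟩

lemma Vd_app {l : List ℝ} {x : ℝ} (h : ValidInstance (l ++ [x])) :
    ValidInstance l ∧ 0 < x ∧ x ≤ 1 := by
  constructor
  · intro s hs; exact h s (by simp [hs])
  · exact h x (by simp)

lemma vl_pos {l : List ℝ} (h : ValidInstance l) {i : ℕ} (hi : i < l.length) :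
    0 < vl l i := by
  have := h (l.get ⟨i, hi⟩) (l.get_mem ⟨i, hi⟩)
  simpa [vl, List.getD_eq_getElem?_getD, List.getElem?_eq_getElem hi] using this.1

lemma vl_le_one {l : List ℝ} (h : ValidInstance l) {i : ℕ} (hi : i < l.length) :
    vl l i ≤ 1 := by
  have := h (l.get ⟨i, hi⟩) (l.get_mem ⟨i, hi⟩)
  simpa [vl, List.getD_eq_getElem?_getD, List.getElem?_eq_getElem hi] using this.2

lemma vl_nonneg {l : List ℝ} (h : ValidInstance l) (i : ℕ) : 0 ≤ vl l i := by
  by_cases hi : i < l.length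
  · exact (vl_pos h hi).le
  · simp [vl, List.getD_eq_getElem?_getD, List.getElem?_eq_none (le_of_not_gt hi)]

lemma sm_nonneg {l : List ℝ} (h : ValidInstance l) (P : Finset ℕ) : 0 ≤ sm l P :=
  Finset.sum_nonneg fun i _ => vl_nonneg h i

lemma sm_mono {l : List ℝ} (h : ValidInstance l) {P Q : Finset ℕ} (hPQ : P ⊆ Q) :
    sm l P ≤ sm l Q :=
  Finset.sum_le_sum_of_subset_of_nonneg hPQ fun i _ _ => vl_nonneg h i

lemma sm_insert {l : List ℝ} {P : Finset ℕ} {k : ℕ} (hk : k ∉ P) :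
    sm l (insert k P) = vl l k + sm l P := Finset.sum_insert hk


/-! ### machinery: running a step function over a list -/

abbrev Step := List ℝ → Finset ℕ → ℝ → Finset ℕ

def run (st : Step) (l : List ℝ) : List ℝ × Finset ℕ :=
  l.foldl (fun s x => (s.1 ++ [x], st s.1 s.2 x)) ([], ∅)

lemma run_fst_aux (st : Step) (l : List ℝ) :
    ∀ (a : List ℝ) (P : Finset ℕ),
      (l.foldl (fun s x => (s.1 ++ [x], st s.1 s.2 x)) (a, P)).1 = a ++ l := by
  induction l with
  | nil => intro a P; simp
  | cons y t ih =>
      intro a P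
      simpa using ih (a ++ [y]) (st a P y)

lemma run_fst (st : Step) (l : List ℝ) : (run st l).1 = l := by
  simpa [run] using run_fst_aux st l [] ∅

def pk (st : Step) (l : List ℝ) : Finset ℕ := (run st l).2

lemma pk_nil (st : Step) : pk st [] = ∅ := rfl

lemma pk_app (st : Step) (l : List ℝ) (x : ℝ) :
    pk st (l ++ [x]) = st l (pk st l) x := by
  have h1 : run st (l ++ [x]) = (fun (s : List ℝ × Finset ℕ) (y : ℝ) =>
      (s.1 ++ [y], st s.1 s.2 y)) (run st l) x := by
    unfold run
    rw [List.foldl_append]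
    simp
  have h2 := run_fst st l
  unfold pk
  rw [h1]
  simp [h2]

/-! ### the tiny-prefix extraction lemma -/

lemma exists_sub (f : ℕ → ℝ) (θ : ℝ) (h0 : 0 ≤ θ) :
    ∀ (S : Finset ℕ), (∀ i ∈ S, 0 ≤ f i ∧ f i ≤ 1/4) → θ ≤ ∑ i ∈ S, f i →
      ∃ S' ⊆ S, θ ≤ ∑ i ∈ S', f i ∧ ∑ i ∈ S', f i ≤ θ + 1/4 := by
  intro S
  induction S using Finset.strongInduction with
  | _ S ih =>
    intro hf hθ
    by_cases hbig : ∑ i ∈ S, f i ≤ θ + 1/4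
    · exact ⟨S, Finset.Subset.refl S, hθ, hbig⟩
    · have hne : S.Nonempty := by
        rcases S.eq_empty_or_nonempty with rfl | h
        · simp at hbig; nlinarith
        · exact h
      obtain ⟨x, hx⟩ := hne
      have hsum : ∑ i ∈ S.erase x, f i = (∑ i ∈ S, f i) - f x := by
        rw [← Finset.add_sum_erase S f hx]; ring
      have hθ' : θ ≤ ∑ i ∈ S.erase x, f i := by
        have := (hf x hx).2
        rw [hsum]; push_neg at hbig; linarith
      obtain ⟨S', hS', h1, h2⟩ := ih (S.erase x) (Finset.erase_ssubset hx)
        (fun i hi => hf i (Finset.mem_of_mem_erase hi)) hθ'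
      exact ⟨S', hS'.trans (Finset.erase_subset x S), h1, h2⟩

/-! ### extra value helpers -/

lemma vl_of_ge {l : List ℝ} {i : ℕ} (h : l.length ≤ i) : vl l i = 0 := by
  simp [vl, List.getD_eq_getElem?_getD, List.getElem?_eq_none h]

/-- the "no large-then-fitting-normal pair" invariant -/
def PairLN (l : List ℝ) : Prop :=
  ∀ i j, i < j → isL (vl l i) → isN (vl l j) → 1 < vl l i + vl l j

lemma PairLN_app {l : List ℝ} {x : ℝ} (h : PairLN l)
    (hnew : isN x → ∀ i, i < l.length → isL (vl l i) → 1 < vl l i + x) :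
    PairLN (l ++ [x]) := by
  intro i j hij hL hN
  rcases Nat.lt_trichotomy j l.length with hj | hj | hj
  · rw [vl_app (by omega) x, vl_app hj x] at *
    exact h i j hij hL hN
  · subst hj
    rw [vl_app_len] at hN ⊢
    rw [vl_app (by omega) x] at hL ⊢
    exact hnew hN i hij hL
  · rw [vl_of_ge (by simp; omega)] at hN
    exact absurd hN.1 (by norm_num)

/-- the "no fitting normal-normal-normal triple" invariant -/
def TripleN (l : List ℝ) : Prop :=
  ∀ i j k, i < j → j < k → isN (vl l i) → isN (vl l j) → isN (vl l k) →
    1 < vl l i + vl l j + vl l k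

lemma TripleN_app {l : List ℝ} {x : ℝ} (h : TripleN l)
    (hnew : isN x → ∀ i j, i < j → j < l.length → isN (vl l i) → isN (vl l j) →
      1 < vl l i + vl l j + x) :
    TripleN (l ++ [x]) := by
  intro i j k hij hjk hNi hNj hNk
  rcases Nat.lt_trichotomy k l.length with hk | hk | hk
  · rw [vl_app (by omega) x, vl_app (by omega) x, vl_app hk x] at *
    exact h i j k hij hjk hNi hNj hNk
  · subst hk
    rw [vl_app_len] at hNk ⊢
    rw [vl_app (by omega) x] at hNi ⊢
    rw [vl_app (by omega) x] at hNj ⊢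
    exact hnew hNk i j hij hjk hNi hNj
  · rw [vl_of_ge (by simp; omega)] at hNk
    exact absurd hNk.1 (by norm_num)

/-- the "no normal-then-fitting-large pair" invariant -/
def PairNL (l : List ℝ) : Prop :=
  ∀ i j, i < j → isN (vl l i) → isL (vl l j) → 1 < vl l i + vl l j

lemma PairNL_app {l : List ℝ} {x : ℝ} (h : PairNL l)
    (hnew : isL x → ∀ i, i < l.length → isN (vl l i) → 1 < vl l i + x) :
    PairNL (l ++ [x]) := by
  intro i j hij hN hL
  rcases Nat.lt_trichotomy j l.length with hj | hj | hj
  · rw [vl_app (by omega) x, vl_app hj x] at *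
    exact h i j hij hN hL
  · subst hj
    rw [vl_app_len] at hL ⊢
    rw [vl_app (by omega) x] at hN ⊢
    exact hnew hL i hij hN
  · rw [vl_of_ge (by simp; omega)] at hL
    exact absurd hL (by norm_num [isL])

/-! ### Algorithm A3 : keep the smallest large item; freeze when a fitting N item arrives -/

attribute [local instance] Classical.propDecidable

def st3 : Step := fun l P x =>
  if 3/4 ≤ sm l P then P
  else if isL x then
    (if ∃ i ∈ P, vl l i ≤ x then P else {l.length})
  else if isN x ∧ ∃ i ∈ P, vl l i + x ≤ 1 then P ∪ {l.length}
  else P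

lemma st3_sub (l : List ℝ) (P : Finset ℕ) (x : ℝ) :
    st3 l P x ⊆ P ∪ {l.length} := by
  unfold st3
  split_ifs <;> simp [Finset.subset_union_left]

def Act3 (l : List ℝ) (P : Finset ℕ) : Prop :=
  (∀ i ∈ P, isL (vl l i)) ∧
  (∀ j ∈ Cix isL l, ∃ i ∈ P, vl l i ≤ vl l j) ∧
  P.card ≤ 1 ∧ PairLN l

def Inv3 (l : List ℝ) (P : Finset ℕ) : Prop :=
  P ⊆ range l.length ∧ sm l P ≤ 1 ∧ (sm l P < 3/4 → Act3 l P)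

lemma inv3_nil : Inv3 [] ∅ := by
  refine ⟨by simp, by simp [sm], fun _ => ⟨by simp, ?_, by simp, ?_⟩⟩
  · intro j hj; simp [Cix] at hj
  · intro i j hij hL hN
    simp [vl, isL] at hL; linarith

lemma inv3_step {l : List ℝ} {P : Finset ℕ} {x : ℝ}
    (hv : ValidInstance (l ++ [x])) (h : Inv3 l P) :
    Inv3 (l ++ [x]) (st3 l P x) := by
  obtain ⟨hvl, hx0, hx1⟩ := Vd_app hv
  obtain ⟨hPr, hc, hact⟩ := h
  have hPr' : P ⊆ range (l ++ [x]).length := by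
    intro i hi; simp only [List.length_append]; exact mem_range.mpr (by
      have := mem_range.mp (hPr hi); omega)
  have hsm : sm (l ++ [x]) P = sm l P := sm_app hPr x
  have hklen : l.length < (l ++ [x]).length := by simp
  have hvk : vl (l ++ [x]) l.length = x := vl_app_len l x
  have hvst : ∀ i ∈ P, vl (l ++ [x]) i = vl l i := fun i hi =>
    vl_app (mem_range.mp (hPr hi)) x
  unfold st3
  split_ifs with hfr hLx hmem hNfit
  · -- frozen
    refine ⟨hPr', by rwa [hsm], fun hlt => absurd hfr (by rw [← hsm]; linarith)⟩
  · -- isL x, some held item ≤ x : keep P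
    push_neg at hfr
    obtain ⟨hPL, hmin, hcard, hpair⟩ := hact hfr
    refine ⟨hPr', by rwa [hsm], fun _ => ?_⟩
    refine ⟨fun i hi => by rw [hvst i hi]; exact hPL i hi, ?_, hcard, ?_⟩
    · intro j hj
      rcases mem_Cix_app.mp hj with hj | ⟨rfl, _⟩
      · obtain ⟨i, hi, hle⟩ := hmin j hj
        exact ⟨i, hi, by rw [hvst i hi, vl_app (mem_Cix.mp hj).1 x]; exact hle⟩
      · obtain ⟨i, hi, hle⟩ := hmem
        exact ⟨i, hi, by rw [hvst i hi, hvk]; exact hle⟩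
    · exact PairLN_app hpair (fun hN => absurd hLx (by simp [isL, isN] at hN ⊢; linarith [hN.2]))
  · -- isL x, no held item ≤ x : P' = {l.length}
    push_neg at hfr
    obtain ⟨hPL, hmin, hcard, hpair⟩ := hact hfr
    push_neg at hmem
    have hsm' : sm (l ++ [x]) {l.length} = x := by simp [sm, hvk]
    refine ⟨by intro i hi; simp at hi; subst hi; exact mem_range.mpr hklen,
      by rw [hsm']; exact hx1, fun _ => ?_⟩
    refine ⟨?_, ?_, by simp, ?_⟩
    · intro i hi; simp at hi; subst hi; rwa [hvk]
    · intro j hj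
      refine ⟨l.length, by simp, ?_⟩
      rw [hvk]
      rcases mem_Cix_app.mp hj with hj | ⟨rfl, _⟩
      · obtain ⟨i, hi, hle⟩ := hmin j hj
        have := hmem i hi
        rw [vl_app (mem_Cix.mp hj).1 x]
        linarith
      · rw [hvk]
    · exact PairLN_app hpair (fun hN => absurd hLx (by simp [isL, isN] at hN ⊢; linarith [hN.2]))
  · -- isN x and fits with a held item : freeze P ∪ {l.length}
    push_neg at hfr
    obtain ⟨hPL, hmin, hcard, hpair⟩ := hact hfr
    obtain ⟨hNx, i, hi, hfit⟩ := hNfit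
    have hkP : l.length ∉ P := fun hk => by
      have := mem_range.mp (hPr hk); omega
    have hPi : P = {i} := by
      have h1 := Finset.card_le_one_iff_subset_singleton.mp hcard
      obtain ⟨a, ha⟩ := h1
      have hia : i = a := by have := ha hi; simpa using this
      subst hia
      exact Finset.Subset.antisymm ha (by simpa using hi)
    have hsm' : sm (l ++ [x]) (P ∪ {l.length}) = vl l i + x := by
      rw [hPi]
      have : ({i} : Finset ℕ) ∪ {l.length} = insert i {l.length} := by
        ext a; simp [or_comm]
      rw [this, sm_insert (by simp; intro hEq; rw [hPi] at hkP; simp [hEq] at hkP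
        )]
      rw [hvst i hi]
      simp [sm, hvk]
    have hiL := hPL i hi
    refine ⟨?_, by rw [hsm']; exact hfit, fun hlt => ?_⟩
    · intro a ha
      rcases Finset.mem_union.mp ha with ha | ha
      · exact hPr' ha
      · simp at ha; subst ha; exact mem_range.mpr hklen
    · exfalso
      rw [hsm'] at hlt
      have := hNx.1
      have := hiL
      simp [isL] at this
      linarith
  · -- no action
    push_neg at hfr
    obtain ⟨hPL, hmin, hcard, hpair⟩ := hact hfr
    refine ⟨hPr', by rwa [hsm], fun _ => ?_⟩
    refine ⟨fun i hi => by rw [hvst i hi]; exact hPL i hi, ?_, hcard, ?_⟩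
    · intro j hj
      rcases mem_Cix_app.mp hj with hj | ⟨rfl, hLx'⟩
      · obtain ⟨i, hi, hle⟩ := hmin j hj
        exact ⟨i, hi, by rw [hvst i hi, vl_app (mem_Cix.mp hj).1 x]; exact hle⟩
      · exact absurd hLx' hLx
    · refine PairLN_app hpair (fun hN i hilen hiL => ?_)
      have hnofit : ∀ a ∈ P, ¬(vl l a + x ≤ 1) := by
        intro a ha hale
        exact hNfit ⟨hN, a, ha, hale⟩
      obtain ⟨i', hi', hle⟩ := hmin i (mem_Cix.mpr ⟨hilen, hiL⟩)
      have := hnofit i' hi'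
      push_neg at this
      linarith

lemma union_sing (P : Finset ℕ) (k : ℕ) : P ∪ {k} = insert k P := by
  ext a; simp [or_comm]

/-! ### Algorithm A1 : keep the two smallest normal items; freeze on fitting triple or fitting large -/

def st1 : Step := fun l P x =>
  if 3/4 ≤ sm l P then P
  else if isN x then
    if P.card ≤ 1 then P ∪ {l.length}
    else if sm l P + x ≤ 1 then P ∪ {l.length}
    else if h : ∃ i ∈ P, (∀ j ∈ P, vl l j ≤ vl l i) ∧ x < vl l i
      then insert l.length (P.erase h.choose) else P
  else if isL x then
    if h : ∃ i ∈ P, vl l i + x ≤ 1 then {h.choose, l.length} else P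
  else P

lemma st1_sub (l : List ℝ) (P : Finset ℕ) (x : ℝ) :
    st1 l P x ⊆ P ∪ {l.length} := by
  unfold st1
  split_ifs with h1 h2 h3 h4 h5 h6 h7 <;>
    try simp [Finset.subset_union_left]
  · intro a ha
    simp at ha ⊢
    rcases ha with rfl | ha
    · exact Or.inl rfl
    · exact Or.inr ha.2
  · intro a ha
    simp at ha ⊢
    rcases ha with rfl | rfl
    · exact Or.inr h7.choose_spec.1
    · exact Or.inl rfl

def Act1 (l : List ℝ) (P : Finset ℕ) : Prop :=
  (∀ i ∈ P, isN (vl l i)) ∧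
  (∀ j ∈ Cix isN l, j ∉ P → ∀ i ∈ P, vl l i ≤ vl l j) ∧
  P.card = min 2 (Cix isN l).card ∧ TripleN l ∧ PairNL l

def Inv1 (l : List ℝ) (P : Finset ℕ) : Prop :=
  P ⊆ range l.length ∧ sm l P ≤ 1 ∧ (sm l P < 3/4 → Act1 l P)

lemma inv1_nil : Inv1 [] ∅ := by
  refine ⟨by simp, by simp [sm], fun _ => ⟨by simp, by simp, ?_, ?_, ?_⟩⟩
  · simp [Cix]
  · intro i j k _ _ hN; exact absurd hN.1 (by norm_num [vl])
  · intro i j _ hN; exact absurd hN.1 (by norm_num [vl])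

/-- from the two-smallest property: the held sum is at most any distinct pair of normal items -/
lemma mirror_min {l : List ℝ} {P : Finset ℕ}
    (hsub : P ⊆ Cix isN l)
    (hmin : ∀ j ∈ Cix isN l, j ∉ P → ∀ i ∈ P, vl l i ≤ vl l j)
    (hcard : P.card = 2) :
    ∀ i ∈ Cix isN l, ∀ j ∈ Cix isN l, i ≠ j → sm l P ≤ vl l i + vl l j := by
  obtain ⟨a, b, hab, rfl⟩ := Finset.card_eq_two.mp hcard
  have hsm : sm l {a, b} = vl l a + vl l b := by
    rw [sm, Finset.sum_insert (by simp [hab]), Finset.sum_singleton]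
  intro i hi j hj hij
  rw [hsm]
  have ha : a ∈ ({a, b} : Finset ℕ) := by simp
  have hb : b ∈ ({a, b} : Finset ℕ) := by simp
  by_cases hiP : i ∈ ({a, b} : Finset ℕ) <;> by_cases hjP : j ∈ ({a, b} : Finset ℕ)
  · simp at hiP hjP
    rcases hiP with rfl | rfl <;> rcases hjP with rfl | rfl <;>
      first | omega | linarith
  · have h1 := hmin j hj hjP a ha
    have h2 := hmin j hj hjP b hb
    simp at hiP
    rcases hiP with rfl | rfl <;> linarith
  · have h1 := hmin i hi hiP a ha
    have h2 := hmin i hi hiP b hb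
    simp at hjP
    rcases hjP with rfl | rfl <;> linarith
  · have h1 := hmin i hi hiP a ha
    have h2 := hmin j hj hjP b hb
    linarith

lemma inv1_step {l : List ℝ} {P : Finset ℕ} {x : ℝ}
    (hv : ValidInstance (l ++ [x])) (h : Inv1 l P) :
    Inv1 (l ++ [x]) (st1 l P x) := by
  obtain ⟨hvl, hx0, hx1⟩ := Vd_app hv
  obtain ⟨hPr, hc, hact⟩ := h
  have hPr' : P ⊆ range (l ++ [x]).length := by
    intro i hi; simp only [List.length_append]; exact mem_range.mpr (by
      have := mem_range.mp (hPr hi); omega)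
  have hsm : sm (l ++ [x]) P = sm l P := sm_app hPr x
  have hklen : l.length < (l ++ [x]).length := by simp
  have hvk : vl (l ++ [x]) l.length = x := vl_app_len l x
  have hvst : ∀ i ∈ P, vl (l ++ [x]) i = vl l i := fun i hi =>
    vl_app (mem_range.mp (hPr hi)) x
  have hkP : l.length ∉ P := fun hk => by
    have := mem_range.mp (hPr hk); omega
  have hCN : ∀ j, j ∈ Cix isN (l ++ [x]) ↔ j ∈ Cix isN l ∨ (j = l.length ∧ isN x) :=
    fun j => mem_Cix_app
  unfold st1
  split_ifs with hfr hNx hcard1 hfit hswap hLx hLfit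
  · exact ⟨hPr', by rwa [hsm], fun hlt => absurd hfr (by rw [← hsm]; linarith)⟩
  all_goals push_neg at hfr
  · -- isN x, ≤ 1 held : add it
    obtain ⟨hPN, hmin, hcard, htrip, hpair⟩ := hact hfr
    have hsub : P ⊆ Cix isN l := fun i hi => mem_Cix.mpr ⟨mem_range.mp (hPr hi), hPN i hi⟩
    have hNle : (Cix isN l).card ≤ 1 := by omega
    have hPeq : P = Cix isN l := Finset.eq_of_subset_of_card_le hsub (by omega)
    have hsm2 : sm (l ++ [x]) (P ∪ {l.length}) = sm l P + x := by
      rw [union_sing, sm_insert hkP, hvk, hsm]; ring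
    have hsmP : sm l P ≤ 1/2 := by
      rcases Finset.card_le_one_iff_subset_singleton.mp hcard1 with ⟨a, ha⟩
      rcases Finset.subset_singleton_iff.mp ha with rfl | rfl
      · rw [sm, Finset.sum_empty]; norm_num
      · rw [sm, Finset.sum_singleton]; exact (hPN a (by simp)).2
    refine ⟨?_, by rw [hsm2]; linarith [hNx.2], fun _ => ?_⟩
    · intro a ha
      rcases Finset.mem_union.mp ha with ha | ha
      · exact hPr' ha
      · simp at ha; subst ha; exact mem_range.mpr hklen
    refine ⟨?_, ?_, ?_, ?_, ?_⟩
    · intro i hi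
      rcases Finset.mem_union.mp hi with hi | hi
      · rw [hvst i hi]; exact hPN i hi
      · simp at hi; subst hi; rwa [hvk]
    · intro j hj hjP
      exfalso
      rcases (hCN j).mp hj with hj | ⟨rfl, _⟩
      · rw [← hPeq] at hj
        exact hjP (Finset.mem_union_left _ hj)
      · exact hjP (by simp)
    · have hcardN' : (Cix isN (l ++ [x])).card = (Cix isN l).card + 1 := by
        have : Cix isN (l ++ [x]) = insert l.length (Cix isN l) := by
          ext j
          rw [hCN j]
          simp [hNx]
          constructor
          · rintro (hj | rfl)
            · exact Or.inr hj
            · exact Or.inl rfl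
          · rintro (rfl | hj)
            · exact Or.inr rfl
            · exact Or.inl hj
        rw [this, Finset.card_insert_of_notMem (fun hk => by
          have := (mem_Cix.mp hk).1; omega)]
      have : (P ∪ {l.length}).card = P.card + 1 := by
        rw [union_sing, Finset.card_insert_of_notMem hkP]
      omega
    · refine TripleN_app htrip (fun _ i j hij hjl hNi hNj => ?_)
      exfalso
      have hi : i ∈ Cix isN l := mem_Cix.mpr ⟨by omega, hNi⟩
      have hj : j ∈ Cix isN l := mem_Cix.mpr ⟨hjl, hNj⟩
      have : 1 < (Cix isN l).card := Finset.one_lt_card.mpr ⟨i, hi, j, hj, by omega⟩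
      omega
    · exact PairNL_app hpair (fun hLx' => absurd hLx'
        (by simp [isL]; linarith [hNx.2]))
  · -- isN x, 2 held, triple fits : freeze
    obtain ⟨hPN, hmin, hcard, htrip, hpair⟩ := hact hfr
    have hc2 : P.card = 2 := by omega
    have hsm2 : sm (l ++ [x]) (P ∪ {l.length}) = sm l P + x := by
      rw [union_sing, sm_insert hkP, hvk, hsm]; ring
    have hsmPlb : 1/2 < sm l P := by
      obtain ⟨a, b, hab, rfl⟩ := Finset.card_eq_two.mp hc2
      have h1 := (hPN a (by simp)).1
      have h2 := (hPN b (by simp)).1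
      rw [sm, Finset.sum_insert (by simp [hab]), Finset.sum_singleton]
      linarith
    refine ⟨?_, by rw [hsm2]; exact hfit, fun hlt => ?_⟩
    · intro a ha
      rcases Finset.mem_union.mp ha with ha | ha
      · exact hPr' ha
      · simp at ha; subst ha; exact mem_range.mpr hklen
    · exfalso; rw [hsm2] at hlt; linarith [hNx.1]
  · -- isN x, 2 held, no fit, swap with the max held
    obtain ⟨hPN, hmin, hcard, htrip, hpair⟩ := hact hfr
    have hc2 : P.card = 2 := by omega
    have hsub : P ⊆ Cix isN l := fun i hi => mem_Cix.mpr ⟨mem_range.mp (hPr hi), hPN i hi⟩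
    obtain ⟨hmemM, hmaxM, hltM⟩ := hswap.choose_spec
    set m := hswap.choose with hm
    have hkerase : l.length ∉ P.erase m := fun h => hkP (Finset.mem_of_mem_erase h)
    have herase_sub : P.erase m ⊆ P := Finset.erase_subset m P
    have hsm2 : sm (l ++ [x]) (insert l.length (P.erase m)) = sm l P - vl l m + x := by
      rw [sm_insert hkerase, hvk]
      have h1 : sm (l ++ [x]) (P.erase m) = sm l (P.erase m) :=
        sm_app (fun i hi => hPr (herase_sub hi)) x
      have h2 : vl l m + ∑ i ∈ P.erase m, vl l i = ∑ i ∈ P, vl l i :=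
        Finset.add_sum_erase P (vl l) hmemM
      rw [h1]
      show x + sm l (P.erase m) = sm l P - vl l m + x
      rw [sm, sm]
      linarith
    have herase_card : (P.erase m).card = 1 := by
      rw [Finset.card_erase_of_mem hmemM, hc2]
    obtain ⟨o, ho⟩ := Finset.card_eq_one.mp herase_card
    have hoPe : o ∈ P.erase m := by rw [ho]; simp
    have hoP : o ∈ P := herase_sub hoPe
    have hom : o ≠ m := (Finset.mem_erase.mp hoPe).1
    have hole : vl l o ≤ vl l m := hmaxM o hoP
    have hPmo : ∀ j ∈ P, j = m ∨ j = o := by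
      intro j hj
      by_cases hjm : j = m
      · exact Or.inl hjm
      · right
        have : j ∈ P.erase m := Finset.mem_erase.mpr ⟨hjm, hj⟩
        rw [ho] at this; simpa using this
    have hko : l.length ≠ o := fun hEq => hkP (hEq ▸ hoP)
    have hsm3 : sm (l ++ [x]) (insert l.length (P.erase m)) = x + vl l o := by
      rw [sm_insert hkerase, hvk, ho, sm, Finset.sum_singleton,
        vl_app (mem_range.mp (hPr hoP)) x]
    refine ⟨?_, ?_, fun _ => ?_⟩
    · intro a ha
      rcases Finset.mem_insert.mp ha with rfl | ha
      · exact mem_range.mpr hklen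
      · exact hPr' (herase_sub ha)
    · rw [hsm2]; linarith
    refine ⟨?_, ?_, ?_, ?_, ?_⟩
    · intro i hi
      rcases Finset.mem_insert.mp hi with rfl | hi
      · rwa [hvk]
      · rw [hvst i (herase_sub hi)]; exact hPN i (herase_sub hi)
    · intro j hj hjP' i hi
      have hvi : vl (l ++ [x]) i = x ∨ (i = o ∧ vl (l ++ [x]) i = vl l o) := by
        rcases Finset.mem_insert.mp hi with rfl | hi
        · exact Or.inl hvk
        · rw [ho] at hi; simp at hi
          exact Or.inr ⟨hi, by rw [hi]; exact hvst o hoP⟩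
      rcases (hCN j).mp hj with hj | ⟨rfl, _⟩
      · rw [vl_app (mem_Cix.mp hj).1 x]
        by_cases hjP : j ∈ P
        · have hjm : j = m := by
            rcases hPmo j hjP with rfl | rfl
            · rfl
            · exfalso; exact hjP' (Finset.mem_insert.mpr (Or.inr hoPe))
          subst hjm
          rcases hvi with hvi | ⟨_, hvi⟩ <;> rw [hvi] <;> linarith
        · have h1 := hmin j hj hjP o hoP
          have h2 := hmin j hj hjP m hmemM
          rcases hvi with hvi | ⟨_, hvi⟩ <;> rw [hvi] <;> linarith
      · exact absurd (Finset.mem_insert_self _ _) hjP'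
    · have hcP' : (insert l.length (P.erase m)).card = 2 := by
        rw [Finset.card_insert_of_notMem hkerase, herase_card]
      have : 2 ≤ (Cix isN (l ++ [x])).card := by
        calc 2 = P.card := hc2.symm
        _ ≤ (Cix isN l).card := Finset.card_le_card hsub
        _ ≤ (Cix isN (l ++ [x])).card :=
            Finset.card_le_card (fun j hj => (hCN j).mpr (Or.inl hj))
      omega
    · refine TripleN_app htrip (fun _ i j hij hjl hNi hNj => ?_)
      have hge := mirror_min hsub hmin hc2 i (mem_Cix.mpr ⟨by omega, hNi⟩)
        j (mem_Cix.mpr ⟨hjl, hNj⟩) (by omega)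
      push_neg at hfit
      linarith
    · exact PairNL_app hpair (fun hLx' => absurd hLx'
        (by simp [isL]; linarith [hNx.2]))
  · -- isN x, 2 held, no fit, x at least the max held : ignore
    obtain ⟨hPN, hmin, hcard, htrip, hpair⟩ := hact hfr
    have hc2 : P.card = 2 := by omega
    have hsub : P ⊆ Cix isN l := fun i hi => mem_Cix.mpr ⟨mem_range.mp (hPr hi), hPN i hi⟩
    push_neg at hswap
    have hxge : ∀ i ∈ P, vl l i ≤ x := by
      obtain ⟨a, b, hab, rfl⟩ := Finset.card_eq_two.mp hc2
      have ha : a ∈ ({a, b} : Finset ℕ) := by simp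
      have hb : b ∈ ({a, b} : Finset ℕ) := by simp
      rcases le_total (vl l a) (vl l b) with hle | hle
      · have := hswap b hb (by intro j hj; simp at hj; rcases hj with rfl | rfl <;> simpa)
        intro i hi; simp at hi; rcases hi with rfl | rfl <;> linarith
      · have := hswap a ha (by intro j hj; simp at hj; rcases hj with rfl | rfl <;> simpa)
        intro i hi; simp at hi; rcases hi with rfl | rfl <;> linarith
    refine ⟨hPr', by rwa [hsm], fun _ => ?_⟩
    refine ⟨fun i hi => by rw [hvst i hi]; exact hPN i hi, ?_, ?_, ?_, ?_⟩
    · intro j hj hjP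
      intro i hi
      rw [hvst i hi]
      rcases (hCN j).mp hj with hj | ⟨rfl, _⟩
      · rw [vl_app (mem_Cix.mp hj).1 x]
        exact hmin j hj hjP i hi
      · rw [hvk]; exact hxge i hi
    · have : 2 ≤ (Cix isN (l ++ [x])).card := by
        calc 2 = P.card := hc2.symm
        _ ≤ (Cix isN l).card := Finset.card_le_card hsub
        _ ≤ (Cix isN (l ++ [x])).card := Finset.card_le_card (fun j hj => (hCN j).mpr (Or.inl hj))
      omega
    · refine TripleN_app htrip (fun _ i j hij hjl hNi hNj => ?_)
      have hge := mirror_min hsub hmin hc2 i (mem_Cix.mpr ⟨by omega, hNi⟩)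
        j (mem_Cix.mpr ⟨hjl, hNj⟩) (by omega)
      linarith
    · exact PairNL_app hpair (fun hLx' => absurd hLx'
        (by simp [isL]; linarith [hNx.2]))
  · -- isL x, a held item fits : freeze
    obtain ⟨hPN, hmin, hcard, htrip, hpair⟩ := hact hfr
    obtain ⟨hmemF, hfitF⟩ := hLfit.choose_spec
    set i := hLfit.choose with hi
    have hiN := hPN i hmemF
    have hik : i ≠ l.length := fun hEq => hkP (hEq ▸ hmemF)
    have hsm2 : sm (l ++ [x]) {i, l.length} = vl l i + x := by
      rw [sm, Finset.sum_insert (by simp [hik]), Finset.sum_singleton, hvk,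
        hvst i hmemF]
    refine ⟨?_, by rw [hsm2]; exact hfitF, fun hlt => ?_⟩
    · intro a ha
      simp at ha
      rcases ha with rfl | rfl
      · exact hPr' hmemF
      · exact mem_range.mpr hklen
    · exfalso; rw [hsm2] at hlt
      have := hiN.1
      simp [isL] at hLx
      linarith
  · -- isL x, nothing fits : ignore
    obtain ⟨hPN, hmin, hcard, htrip, hpair⟩ := hact hfr
    push_neg at hLfit
    refine ⟨hPr', by rwa [hsm], fun _ => ?_⟩
    refine ⟨fun i hi => by rw [hvst i hi]; exact hPN i hi, ?_, ?_, ?_, ?_⟩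
    · intro j hj hjP i hi
      rw [hvst i hi]
      rcases (hCN j).mp hj with hj | ⟨rfl, hNx'⟩
      · rw [vl_app (mem_Cix.mp hj).1 x]
        exact hmin j hj hjP i hi
      · exact absurd hNx' hNx
    · have : Cix isN (l ++ [x]) = Cix isN l := by
        ext j
        rw [hCN j]
        constructor
        · rintro (hj | ⟨rfl, hNx'⟩)
          · exact hj
          · exact absurd hNx' hNx
        · exact Or.inl
      rw [this]; exact hcard
    · exact TripleN_app htrip (fun hNx' => absurd hNx' hNx)
    · refine PairNL_app hpair (fun _ i hilen hNi => ?_)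
      have hiC : i ∈ Cix isN l := mem_Cix.mpr ⟨hilen, hNi⟩
      by_cases hiP : i ∈ P
      · have := hLfit i hiP; linarith
      · have hPne : P.Nonempty := by
          have : 1 ≤ (Cix isN l).card := Finset.card_pos.mpr ⟨i, hiC⟩
          have : 1 ≤ P.card := by omega
          exact Finset.card_pos.mp this
        obtain ⟨a, ha⟩ := hPne
        have h1 := hmin i hiC hiP a ha
        have h2 := hLfit a ha
        linarith
  · -- tiny : ignore
    obtain ⟨hPN, hmin, hcard, htrip, hpair⟩ := hact hfr
    refine ⟨hPr', by rwa [hsm], fun _ => ?_⟩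
    refine ⟨fun i hi => by rw [hvst i hi]; exact hPN i hi, ?_, ?_, ?_, ?_⟩
    · intro j hj hjP i hi
      rw [hvst i hi]
      rcases (hCN j).mp hj with hj | ⟨rfl, hNx'⟩
      · rw [vl_app (mem_Cix.mp hj).1 x]
        exact hmin j hj hjP i hi
      · exact absurd hNx' hNx
    · have : Cix isN (l ++ [x]) = Cix isN l := by
        ext j
        rw [hCN j]
        constructor
        · rintro (hj | ⟨rfl, hNx'⟩)
          · exact hj
          · exact absurd hNx' hNx
        · exact Or.inl
      rw [this]; exact hcard
    · exact TripleN_app htrip (fun hNx' => absurd hNx' hNx)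
    · exact PairNL_app hpair (fun hLx' => absurd hLx' hLx)

/-! ### Algorithm A4 : keep the largest large item plus all tiny items -/

def Qt (l : List ℝ) (P : Finset ℕ) : Finset ℕ := P.filter fun i => isT (vl l i)

def st4 : Step := fun l P x =>
  if 3/4 ≤ sm l P then P
  else if isT x then P ∪ {l.length}
  else if isL x then
    if ∃ i ∈ P, x ≤ vl l i then P
    else if x + sm l (Qt l P) ≤ 1 then Qt l P ∪ {l.length}
    else if 3/4 ≤ x then {l.length}
    else if hsub : 0 ≤ 3/4 - x ∧ 3/4 - x ≤ sm l (Qt l P) ∧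
        (∀ i ∈ Qt l P, 0 ≤ vl l i ∧ vl l i ≤ 1/4)
      then (exists_sub (vl l) (3/4 - x) hsub.1 (Qt l P) hsub.2.2 hsub.2.1).choose ∪ {l.length}
      else P
  else P

lemma st4_sub (l : List ℝ) (P : Finset ℕ) (x : ℝ) :
    st4 l P x ⊆ P ∪ {l.length} := by
  unfold st4
  split_ifs with h1 h2 h3 h4 h5 h6 h7
  · exact Finset.subset_union_left
  · exact Finset.Subset.refl _
  · exact Finset.subset_union_left
  · exact Finset.union_subset_union (Finset.filter_subset _ _) (Finset.Subset.refl _)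
  · exact Finset.subset_union_right
  · refine Finset.union_subset_union ?_ (Finset.Subset.refl _)
    intro a ha
    have hspec := (exists_sub (vl l) (3/4 - x) h7.1 (Qt l P) h7.2.2 h7.2.1).choose_spec
    exact Finset.filter_subset _ _ (hspec.1 ha)
  · exact Finset.subset_union_left
  · exact Finset.subset_union_left

def Act4 (l : List ℝ) (P : Finset ℕ) : Prop :=
  (Cix isT l ⊆ P) ∧
  (∀ i ∈ P, isT (vl l i) ∨ isL (vl l i)) ∧
  (∀ j ∈ Cix isL l, ∃ i ∈ P, isL (vl l i) ∧ vl l j ≤ vl l i)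

def Inv4 (l : List ℝ) (P : Finset ℕ) : Prop :=
  P ⊆ range l.length ∧ sm l P ≤ 1 ∧ (sm l P < 3/4 → Act4 l P)

lemma inv4_nil : Inv4 [] ∅ := by
  refine ⟨by simp, by simp [sm], fun _ => ⟨?_, by simp, ?_⟩⟩
  · intro j hj; simp [Cix] at hj
  · intro j hj; simp [Cix] at hj

lemma inv4_step {l : List ℝ} {P : Finset ℕ} {x : ℝ}
    (hv : ValidInstance (l ++ [x])) (h : Inv4 l P) :
    Inv4 (l ++ [x]) (st4 l P x) := by
  obtain ⟨hvl, hx0, hx1⟩ := Vd_app hv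
  obtain ⟨hPr, hc, hact⟩ := h
  have hPr' : P ⊆ range (l ++ [x]).length := by
    intro i hi; simp only [List.length_append]; exact mem_range.mpr (by
      have := mem_range.mp (hPr hi); omega)
  have hsm : sm (l ++ [x]) P = sm l P := sm_app hPr x
  have hklen : l.length < (l ++ [x]).length := by simp
  have hvk : vl (l ++ [x]) l.length = x := vl_app_len l x
  have hvst : ∀ i ∈ P, vl (l ++ [x]) i = vl l i := fun i hi =>
    vl_app (mem_range.mp (hPr hi)) x
  have hkP : l.length ∉ P := fun hk => by
    have := mem_range.mp (hPr hk); omega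
  have hQsub : Qt l P ⊆ P := Finset.filter_subset _ _
  have hkQ : l.length ∉ Qt l P := fun hk => hkP (hQsub hk)
  have hsmQ : sm (l ++ [x]) (Qt l P) = sm l (Qt l P) := sm_app (fun i hi => hPr (hQsub hi)) x
  have hvstQ : ∀ i ∈ Qt l P, vl (l ++ [x]) i = vl l i := fun i hi => hvst i (hQsub hi)
  unfold st4
  split_ifs with hfr hTx hLx hheld hfits hbig hsub
  · exact ⟨hPr', by rwa [hsm], fun hlt => absurd hfr (by rw [← hsm]; linarith)⟩
  all_goals push_neg at hfr
  · -- tiny : add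
    obtain ⟨hTsub, htype, hmax⟩ := hact hfr
    have hsm2 : sm (l ++ [x]) (P ∪ {l.length}) = sm l P + x := by
      rw [union_sing, sm_insert hkP, hvk, hsm]; ring
    refine ⟨?_, by rw [hsm2]; simp [isT] at hTx; linarith, fun _ => ?_⟩
    · intro a ha
      rcases Finset.mem_union.mp ha with ha | ha
      · exact hPr' ha
      · simp at ha; subst ha; exact mem_range.mpr hklen
    refine ⟨?_, ?_, ?_⟩
    · intro j hj
      rcases mem_Cix_app.mp hj with hj | ⟨rfl, _⟩
      · exact Finset.mem_union_left _ (hTsub hj)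
      · exact Finset.mem_union_right _ (by simp)
    · intro i hi
      rcases Finset.mem_union.mp hi with hi | hi
      · rw [hvst i hi]; exact htype i hi
      · simp at hi; subst hi; rw [hvk]; exact Or.inl hTx
    · intro j hj
      rcases mem_Cix_app.mp hj with hj | ⟨rfl, hLx'⟩
      · obtain ⟨i, hi, hiL, hle⟩ := hmax j hj
        exact ⟨i, Finset.mem_union_left _ hi, by rw [hvst i hi]; exact hiL,
          by rw [hvst i hi, vl_app (mem_Cix.mp hj).1 x]; exact hle⟩
      · exact absurd hLx' (by simp [isL, isT] at hTx ⊢; linarith)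
  · -- isL x, current max at least x : ignore
    obtain ⟨hTsub, htype, hmax⟩ := hact hfr
    refine ⟨hPr', by rwa [hsm], fun _ => ?_⟩
    refine ⟨?_, ?_, ?_⟩
    · intro j hj
      rcases mem_Cix_app.mp hj with hj | ⟨rfl, hTx'⟩
      · exact hTsub hj
      · exact absurd hTx' hTx
    · intro i hi; rw [hvst i hi]; exact htype i hi
    · intro j hj
      rcases mem_Cix_app.mp hj with hj | ⟨rfl, _⟩
      · obtain ⟨i, hi, hiL, hle⟩ := hmax j hj
        exact ⟨i, hi, by rw [hvst i hi]; exact hiL,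
          by rw [hvst i hi, vl_app (mem_Cix.mp hj).1 x]; exact hle⟩
      · obtain ⟨i, hi, hle⟩ := hheld
        exact ⟨i, hi, by rw [hvst i hi]; simp [isL] at hLx ⊢; linarith, by rw [hvst i hi, hvk]; exact hle⟩
  · -- isL x, new max, fits with tiny items : swap in
    obtain ⟨hTsub, htype, hmax⟩ := hact hfr
    push_neg at hheld
    have hsm2 : sm (l ++ [x]) (Qt l P ∪ {l.length}) = x + sm l (Qt l P) := by
      rw [union_sing, sm_insert hkQ, hvk, hsmQ]
    have hTeq : Cix isT l = Qt l P := by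
      apply Finset.Subset.antisymm
      · intro j hj
        exact Finset.mem_filter.mpr ⟨hTsub hj, (mem_Cix.mp hj).2⟩
      · intro j hj
        obtain ⟨hjP, hjT⟩ := Finset.mem_filter.mp hj
        exact mem_Cix.mpr ⟨mem_range.mp (hPr hjP), hjT⟩
    refine ⟨?_, by rw [hsm2]; exact hfits, fun _ => ?_⟩
    · intro a ha
      rcases Finset.mem_union.mp ha with ha | ha
      · exact hPr' (hQsub ha)
      · simp at ha; subst ha; exact mem_range.mpr hklen
    refine ⟨?_, ?_, ?_⟩
    · intro j hj
      rcases mem_Cix_app.mp hj with hj | ⟨rfl, hTx'⟩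
      · exact Finset.mem_union_left _ (hTeq ▸ hj)
      · exact absurd hTx' hTx
    · intro i hi
      rcases Finset.mem_union.mp hi with hi | hi
      · rw [hvstQ i hi]; exact Or.inl (Finset.mem_filter.mp hi).2
      · simp at hi; subst hi; rw [hvk]; exact Or.inr hLx
    · intro j hj
      refine ⟨l.length, Finset.mem_union_right _ (by simp), by rwa [hvk], ?_⟩
      rw [hvk]
      rcases mem_Cix_app.mp hj with hj | ⟨rfl, _⟩
      · obtain ⟨i, hi, hiL, hle⟩ := hmax j hj
        have := hheld i hi
        rw [vl_app (mem_Cix.mp hj).1 x]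
        linarith
      · rw [hvk]
  · -- isL x, big : freeze alone
    have hsm2 : sm (l ++ [x]) {l.length} = x := by simp [sm, hvk]
    refine ⟨by intro a ha; simp at ha; subst ha; exact mem_range.mpr hklen,
      by rw [hsm2]; exact hx1, fun hlt => absurd hbig (by rw [hsm2] at hlt; linarith)⟩
  · -- isL x, overflow : freeze with a tiny prefix
    set S := (exists_sub (vl l) (3/4 - x) hsub.1 (Qt l P) hsub.2.2 hsub.2.1).choose with hS
    obtain ⟨hS1, hS2, hS3⟩ := (exists_sub (vl l) (3/4 - x) hsub.1 (Qt l P) hsub.2.2 hsub.2.1).choose_spec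
    have hkS : l.length ∉ S := fun hk => hkQ (hS1 hk)
    have hsm2 : sm (l ++ [x]) (S ∪ {l.length}) = (∑ i ∈ S, vl l i) + x := by
      rw [union_sing, sm_insert hkS, hvk]
      have : sm (l ++ [x]) S = sm l S := sm_app (fun i hi => hPr (hQsub (hS1 hi))) x
      rw [this, sm]; ring
    refine ⟨?_, by rw [hsm2]; linarith, fun hlt => by rw [hsm2] at hlt; linarith⟩
    intro a ha
    rcases Finset.mem_union.mp ha with ha | ha
    · exact hPr' (hQsub (hS1 ha))
    · simp at ha; subst ha; exact mem_range.mpr hklen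
  ·
    exfalso
    push_neg at hfits hbig hsub
    apply absurd hsub
    push_neg
    refine ⟨by linarith, by linarith, fun i hi => ?_⟩
    have hiP := hQsub hi
    exact ⟨(vl_pos hvl (mem_range.mp (hPr hiP))).le, (Finset.mem_filter.mp hi).2⟩
  · -- normal item : ignore
    obtain ⟨hTsub, htype, hmax⟩ := hact hfr
    refine ⟨hPr', by rwa [hsm], fun _ => ?_⟩
    refine ⟨?_, ?_, ?_⟩
    · intro j hj
      rcases mem_Cix_app.mp hj with hj | ⟨rfl, hTx'⟩
      · exact hTsub hj
      · exact absurd hTx' hTx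
    · intro i hi; rw [hvst i hi]; exact htype i hi
    · intro j hj
      rcases mem_Cix_app.mp hj with hj | ⟨rfl, hLx'⟩
      · obtain ⟨i, hi, hiL, hle⟩ := hmax j hj
        exact ⟨i, hi, by rw [hvst i hi]; exact hiL,
          by rw [hvst i hi, vl_app (mem_Cix.mp hj).1 x]; exact hle⟩
      · exact absurd hLx' hLx

/-! ### Algorithm A2 : keep the two largest normal items plus all tiny items -/

def Qn (l : List ℝ) (P : Finset ℕ) : Finset ℕ := P.filter fun i => isN (vl l i)

def st2 : Step := fun l P x =>
  if 3/4 ≤ sm l P then P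
  else if isT x then P ∪ {l.length}
  else if isN x then
    if (Qn l P).card ≤ 1 then
      if sm l P + x ≤ 1 then P ∪ {l.length}
      else if 3/4 ≤ sm l (Qn l P) + x then Qn l P ∪ {l.length}
      else if hsub : 0 ≤ 3/4 - (sm l (Qn l P) + x) ∧
          3/4 - (sm l (Qn l P) + x) ≤ sm l (P \ Qn l P) ∧
          (∀ i ∈ P \ Qn l P, 0 ≤ vl l i ∧ vl l i ≤ 1/4)
        then ((exists_sub (vl l) (3/4 - (sm l (Qn l P) + x)) hsub.1 (P \ Qn l P)
            hsub.2.2 hsub.2.1).choose ∪ Qn l P) ∪ {l.length}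
        else P
    else if hmin : ∃ i ∈ Qn l P, (∀ j ∈ Qn l P, vl l i ≤ vl l j) ∧ vl l i < x
      then insert l.length (P.erase hmin.choose) else P
  else P

lemma st2_sub (l : List ℝ) (P : Finset ℕ) (x : ℝ) :
    st2 l P x ⊆ P ∪ {l.length} := by
  unfold st2
  split_ifs with h1 h2 h3 h4 h5 h6 h7 h8
  · exact Finset.subset_union_left
  · exact Finset.Subset.refl _
  · exact Finset.Subset.refl _
  · exact Finset.union_subset_union (Finset.filter_subset _ _) (Finset.Subset.refl _)
  · refine Finset.union_subset_union ?_ (Finset.Subset.refl _)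
    intro a ha
    rcases Finset.mem_union.mp ha with ha | ha
    · have hspec := (exists_sub (vl l) (3/4 - (sm l (Qn l P) + x)) h7.1 (P \ Qn l P)
        h7.2.2 h7.2.1).choose_spec
      exact (Finset.sdiff_subset) (hspec.1 ha)
    · exact Finset.filter_subset _ _ ha
  · exact Finset.subset_union_left
  · intro a ha
    rcases Finset.mem_insert.mp ha with rfl | ha
    · exact Finset.mem_union_right _ (by simp)
    · exact Finset.mem_union_left _ (Finset.mem_of_mem_erase ha)
  · exact Finset.subset_union_left
  · exact Finset.subset_union_left

def Act2 (l : List ℝ) (P : Finset ℕ) : Prop :=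
  (Cix isT l ⊆ P) ∧
  (∀ i ∈ P, isT (vl l i) ∨ isN (vl l i)) ∧
  ((Qn l P).card = min 2 (Cix isN l).card) ∧
  (∀ j ∈ Cix isN l, j ∉ P → ∀ i ∈ Qn l P, vl l j ≤ vl l i)

def Inv2 (l : List ℝ) (P : Finset ℕ) : Prop :=
  P ⊆ range l.length ∧ sm l P ≤ 1 ∧ (sm l P < 3/4 → Act2 l P)

lemma inv2_nil : Inv2 [] ∅ := by
  refine ⟨by simp, by simp [sm], fun _ => ⟨?_, by simp, ?_, ?_⟩⟩
  · intro j hj; simp [Cix] at hj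
  · simp [Qn, Cix]
  · intro j hj; simp [Cix] at hj

lemma inv2_step {l : List ℝ} {P : Finset ℕ} {x : ℝ}
    (hv : ValidInstance (l ++ [x])) (h : Inv2 l P) :
    Inv2 (l ++ [x]) (st2 l P x) := by
  obtain ⟨hvl, hx0, hx1⟩ := Vd_app hv
  obtain ⟨hPr, hc, hact⟩ := h
  have hPr' : P ⊆ range (l ++ [x]).length := by
    intro i hi; simp only [List.length_append]; exact mem_range.mpr (by
      have := mem_range.mp (hPr hi); omega)
  have hsm : sm (l ++ [x]) P = sm l P := sm_app hPr x
  have hklen : l.length < (l ++ [x]).length := by simp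
  have hvk : vl (l ++ [x]) l.length = x := vl_app_len l x
  have hvst : ∀ i ∈ P, vl (l ++ [x]) i = vl l i := fun i hi =>
    vl_app (mem_range.mp (hPr hi)) x
  have hkP : l.length ∉ P := fun hk => by
    have := mem_range.mp (hPr hk); omega
  have hQsub : Qn l P ⊆ P := Finset.filter_subset _ _
  have hkQ : l.length ∉ Qn l P := fun hk => hkP (hQsub hk)
  have hQstable : ∀ R ⊆ P, Qn (l ++ [x]) R = Qn l R := by
    intro R hR
    apply Finset.filter_congr
    intro i hi
    rw [hvst i (hR hi)]
  have hsplit : sm l (Qn l P) + sm l (P \ Qn l P) = sm l P := by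
    have h1 : P \ Qn l P = P.filter (fun i => ¬ isN (vl l i)) := by
      rw [Finset.filter_not]; rfl
    rw [h1, sm, sm, sm]
    exact Finset.sum_filter_add_sum_filter_not P _ (vl l)
  have hQval : ∀ i ∈ Qn l P, isN (vl l i) := fun i hi => (Finset.mem_filter.mp hi).2
  have hQCN : Qn l P ⊆ Cix isN l := fun i hi =>
    mem_Cix.mpr ⟨mem_range.mp (hPr (hQsub hi)), hQval i hi⟩
  unfold st2
  split_ifs with hfr hTx hNx hcard1 hfit hfz hsub hmin
  · exact ⟨hPr', by rwa [hsm], fun hlt => absurd hfr (by rw [← hsm]; linarith)⟩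
  all_goals push_neg at hfr
  · -- tiny : add
    obtain ⟨hTsub, htype, hcard, hmax⟩ := hact hfr
    have hsm2 : sm (l ++ [x]) (P ∪ {l.length}) = sm l P + x := by
      rw [union_sing, sm_insert hkP, hvk, hsm]; ring
    have hQ' : Qn (l ++ [x]) (P ∪ {l.length}) = Qn l P := by
      rw [union_sing]
      have h9 : Qn (l ++ [x]) (insert l.length P) = Qn (l ++ [x]) P := by
        unfold Qn
        rw [Finset.filter_insert,
          if_neg (by rw [hvk]; simp [isN, isT] at hTx ⊢; intro; linarith)]
      rw [h9, hQstable P (Finset.Subset.refl P)]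
    have hCN' : Cix isN (l ++ [x]) = Cix isN l := by
      ext j
      rw [mem_Cix_app]
      constructor
      · rintro (hj | ⟨rfl, hNx'⟩)
        · exact hj
        · exact absurd hNx' (by simp [isN, isT] at hTx ⊢; intro; linarith)
      · exact Or.inl
    refine ⟨?_, by rw [hsm2]; simp [isT] at hTx; linarith, fun _ => ?_⟩
    · intro a ha
      rcases Finset.mem_union.mp ha with ha | ha
      · exact hPr' ha
      · simp at ha; subst ha; exact mem_range.mpr hklen
    refine ⟨?_, ?_, ?_, ?_⟩
    · intro j hj
      rcases mem_Cix_app.mp hj with hj | ⟨rfl, _⟩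
      · exact Finset.mem_union_left _ (hTsub hj)
      · exact Finset.mem_union_right _ (by simp)
    · intro i hi
      rcases Finset.mem_union.mp hi with hi | hi
      · rw [hvst i hi]; exact htype i hi
      · simp at hi; subst hi; rw [hvk]; exact Or.inl hTx
    · rw [hQ', hCN']; exact hcard
    · intro j hj hjP i hi
      rw [hQ'] at hi
      rw [hCN'] at hj
      have hjP2 : j ∉ P := fun hh => hjP (Finset.mem_union_left _ hh)
      rw [vl_app (mem_Cix.mp hj).1 x, hvst i (hQsub hi)]
      exact hmax j hj hjP2 i hi
  · -- isN, few held, fits : add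
    obtain ⟨hTsub, htype, hcard, hmax⟩ := hact hfr
    have hsm2 : sm (l ++ [x]) (P ∪ {l.length}) = sm l P + x := by
      rw [union_sing, sm_insert hkP, hvk, hsm]; ring
    have hNle : (Cix isN l).card ≤ 1 := by omega
    have hQeq : Qn l P = Cix isN l := Finset.eq_of_subset_of_card_le hQCN (by omega)
    have hQ' : Qn (l ++ [x]) (P ∪ {l.length}) = Qn l P ∪ {l.length} := by
      rw [union_sing, union_sing]
      have h9 : Qn (l ++ [x]) (insert l.length P) = insert l.length (Qn (l ++ [x]) P) := by
        unfold Qn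
        rw [Finset.filter_insert, if_pos (by rwa [hvk])]
      rw [h9, hQstable P (Finset.Subset.refl P)]
    have hCN' : Cix isN (l ++ [x]) = insert l.length (Cix isN l) := by
      ext j
      rw [mem_Cix_app]
      simp only [Finset.mem_insert]
      constructor
      · rintro (hj | ⟨rfl, _⟩)
        · exact Or.inr hj
        · exact Or.inl rfl
      · rintro (rfl | hj)
        · exact Or.inr ⟨rfl, hNx⟩
        · exact Or.inl hj
    refine ⟨?_, by rw [hsm2]; exact hfit, fun _ => ?_⟩
    · intro a ha
      rcases Finset.mem_union.mp ha with ha | ha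
      · exact hPr' ha
      · simp at ha; subst ha; exact mem_range.mpr hklen
    refine ⟨?_, ?_, ?_, ?_⟩
    · intro j hj
      rcases mem_Cix_app.mp hj with hj | ⟨rfl, hTx'⟩
      · exact Finset.mem_union_left _ (hTsub hj)
      · exact absurd hTx' hTx
    · intro i hi
      rcases Finset.mem_union.mp hi with hi | hi
      · rw [hvst i hi]; exact htype i hi
      · simp at hi; subst hi; rw [hvk]; exact Or.inr hNx
    · rw [hQ', hCN', union_sing, Finset.card_insert_of_notMem hkQ,
        Finset.card_insert_of_notMem (fun hk => by have := (mem_Cix.mp hk).1; omega)]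
      omega
    · intro j hj hjP i hi
      exfalso
      rcases mem_Cix_app.mp hj with hj | ⟨rfl, _⟩
      · rw [← hQeq] at hj
        exact hjP (Finset.mem_union_left _ (hQsub hj))
      · exact hjP (Finset.mem_union_right _ (by simp))
  · -- isN, few held, overflow but held+new big : freeze
    obtain ⟨hTsub, htype, hcard, hmax⟩ := hact hfr
    have hsmQle : sm l (Qn l P) ≤ 1/2 := by
      rcases Finset.card_le_one_iff_subset_singleton.mp hcard1 with ⟨a, ha⟩
      rcases Finset.subset_singleton_iff.mp ha with hQe | hQe <;> rw [hQe]
      · rw [sm, Finset.sum_empty]; norm_num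
      · rw [sm, Finset.sum_singleton]
        exact (hQval a (by rw [hQe]; simp)).2
    have hsm2 : sm (l ++ [x]) (Qn l P ∪ {l.length}) = sm l (Qn l P) + x := by
      rw [union_sing, sm_insert hkQ, hvk, sm_app (fun i hi => hPr (hQsub hi)) x]; ring
    refine ⟨?_, by rw [hsm2]; linarith [hNx.2], fun hlt => absurd hfz (by rw [hsm2] at hlt; linarith)⟩
    intro a ha
    rcases Finset.mem_union.mp ha with ha | ha
    · exact hPr' (hQsub ha)
    · simp at ha; subst ha; exact mem_range.mpr hklen
  · -- isN, few held, overflow : freeze with tiny prefix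
    have hspec := (exists_sub (vl l) (3/4 - (sm l (Qn l P) + x)) hsub.1 (P \ Qn l P)
      hsub.2.2 hsub.2.1).choose_spec
    set S := (exists_sub (vl l) (3/4 - (sm l (Qn l P) + x)) hsub.1 (P \ Qn l P)
      hsub.2.2 hsub.2.1).choose with hS
    obtain ⟨hS1, hS2, hS3⟩ := hspec
    have hSP : S ⊆ P := fun a ha => (Finset.sdiff_subset) (hS1 ha)
    have hkS : l.length ∉ S := fun hk => hkP (hSP hk)
    have hSQdisj : Disjoint S (Qn l P) := by
      apply Finset.disjoint_left.mpr
      intro a ha haQ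
      exact (Finset.mem_sdiff.mp (hS1 ha)).2 haQ
    have hsm2 : sm (l ++ [x]) ((S ∪ Qn l P) ∪ {l.length}) =
        (∑ i ∈ S, vl l i) + sm l (Qn l P) + x := by
      rw [union_sing, sm_insert (by
        intro hk
        rcases Finset.mem_union.mp hk with hk | hk
        · exact hkS hk
        · exact hkQ hk), hvk]
      have : sm (l ++ [x]) (S ∪ Qn l P) = sm l (S ∪ Qn l P) :=
        sm_app (fun i hi => by
          rcases Finset.mem_union.mp hi with hi | hi
          · exact hPr (hSP hi)
          · exact hPr (hQsub hi)) x
      rw [this, sm, Finset.sum_union hSQdisj]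
      show x + ((∑ i ∈ S, vl l i) + sm l (Qn l P)) = _
      ring
    refine ⟨?_, by rw [hsm2]; linarith, fun hlt => by rw [hsm2] at hlt; linarith⟩
    intro a ha
    rcases Finset.mem_union.mp ha with ha | ha
    · rcases Finset.mem_union.mp ha with ha | ha
      · exact hPr' (hSP ha)
      · exact hPr' (hQsub ha)
    · simp at ha; subst ha; exact mem_range.mpr hklen
  · -- isN, few held, unreachable : the side conditions do hold
    exfalso
    obtain ⟨hTsub, htype, hcard, hmax⟩ := hact hfr
    push_neg at hfit hfz hsub
    apply absurd hsub
    push_neg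
    refine ⟨by linarith, by linarith, fun i hi => ?_⟩
    obtain ⟨hiP, hiQ⟩ := Finset.mem_sdiff.mp hi
    refine ⟨(vl_pos hvl (mem_range.mp (hPr hiP))).le, ?_⟩
    rcases htype i hiP with hT | hN
    · exact hT
    · exact absurd (Finset.mem_filter.mpr ⟨hiP, hN⟩) hiQ
  · -- isN, two held, new is bigger than the min : swap
    obtain ⟨hTsub, htype, hcard, hmax⟩ := hact hfr
    obtain ⟨hmemM, hminM, hltM⟩ := hmin.choose_spec
    set m := hmin.choose with hm
    have hmP : m ∈ P := hQsub hmemM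
    have hmN := hQval m hmemM
    have hkerase : l.length ∉ P.erase m := fun h => hkP (Finset.mem_of_mem_erase h)
    have herase_sub : P.erase m ⊆ P := Finset.erase_subset m P
    have hc2 : (Qn l P).card = 2 := by omega
    have hsm2 : sm (l ++ [x]) (insert l.length (P.erase m)) = sm l P - vl l m + x := by
      rw [sm_insert hkerase, hvk]
      have h1 : sm (l ++ [x]) (P.erase m) = sm l (P.erase m) :=
        sm_app (fun i hi => hPr (herase_sub hi)) x
      have h2 : vl l m + ∑ i ∈ P.erase m, vl l i = ∑ i ∈ P, vl l i :=
        Finset.add_sum_erase P (vl l) hmP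
      rw [h1]
      show x + sm l (P.erase m) = sm l P - vl l m + x
      rw [sm, sm]; linarith
    have hQ' : Qn (l ++ [x]) (insert l.length (P.erase m)) =
        insert l.length ((Qn l P).erase m) := by
      unfold Qn
      rw [Finset.filter_insert, if_pos (by rwa [hvk])]
      congr 1
      ext a
      simp only [Finset.mem_filter, Finset.mem_erase]
      constructor
      · rintro ⟨⟨ham, haP⟩, haN⟩
        rw [vl_app (mem_range.mp (hPr haP)) x] at haN
        exact ⟨ham, haP, haN⟩
      · rintro ⟨ham, haP, haN⟩
        exact ⟨⟨ham, haP⟩, by rwa [vl_app (mem_range.mp (hPr haP)) x]⟩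
    refine ⟨?_, by rw [hsm2]; linarith [hmN.1, hNx.2], fun _ => ?_⟩
    · intro a ha
      rcases Finset.mem_insert.mp ha with rfl | ha
      · exact mem_range.mpr hklen
      · exact hPr' (herase_sub ha)
    refine ⟨?_, ?_, ?_, ?_⟩
    · intro j hj
      rcases mem_Cix_app.mp hj with hj | ⟨rfl, hTx'⟩
      · have hjP := hTsub hj
        have hjm : j ≠ m := fun hEq => by
          have := (mem_Cix.mp hj).2
          rw [hEq] at this
          simp [isT, isN] at this hmN
          linarith [hmN.1]
        exact Finset.mem_insert.mpr (Or.inr (Finset.mem_erase.mpr ⟨hjm, hjP⟩))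
      · exact absurd hTx' hTx
    · intro i hi
      rcases Finset.mem_insert.mp hi with rfl | hi
      · rw [hvk]; exact Or.inr hNx
      · rw [hvst i (herase_sub hi)]; exact htype i (herase_sub hi)
    · rw [hQ']
      rw [Finset.card_insert_of_notMem (fun hk => hkQ (Finset.mem_of_mem_erase hk)),
        Finset.card_erase_of_mem hmemM, hc2]
      have h2le : 2 ≤ (Cix isN (l ++ [x])).card := by
        calc 2 = (Qn l P).card := hc2.symm
        _ ≤ (Cix isN l).card := Finset.card_le_card hQCN
        _ ≤ (Cix isN (l ++ [x])).card :=
            Finset.card_le_card (fun j hj => mem_Cix_app.mpr (Or.inl hj))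
      omega
    · intro j hj hjP' i hi
      rw [hQ'] at hi
      have hvi : vl (l ++ [x]) i = x ∨ (i ∈ (Qn l P).erase m ∧
          vl (l ++ [x]) i = vl l i) := by
        rcases Finset.mem_insert.mp hi with rfl | hi
        · exact Or.inl hvk
        · exact Or.inr ⟨hi, hvst i (herase_sub (Finset.mem_erase.mpr
            ⟨(Finset.mem_erase.mp hi).1, hQsub (Finset.mem_of_mem_erase hi)⟩))⟩
      rcases mem_Cix_app.mp hj with hj | ⟨rfl, _⟩
      · rw [vl_app (mem_Cix.mp hj).1 x]
        by_cases hjP : j ∈ P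
        · have hjm : j = m := by
            by_contra hne
            exact hjP' (Finset.mem_insert.mpr (Or.inr (Finset.mem_erase.mpr ⟨hne, hjP⟩)))
          subst hjm
          rcases hvi with hvi | ⟨hiQ, hvi⟩ <;> rw [hvi]
          · linarith
          · exact hminM i (Finset.mem_of_mem_erase hiQ)
        · have h1 := hmax j hj hjP m hmemM
          rcases hvi with hvi | ⟨hiQ, hvi⟩ <;> rw [hvi]
          · linarith
          · exact le_trans h1 (hminM i (Finset.mem_of_mem_erase hiQ))
      · exact absurd (Finset.mem_insert_self _ _) hjP'
  · -- isN, two held, new not bigger : ignore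
    obtain ⟨hTsub, htype, hcard, hmax⟩ := hact hfr
    have hc2 : (Qn l P).card = 2 := by omega
    push_neg at hmin
    have hQne : (Qn l P).Nonempty := Finset.card_pos.mp (by omega)
    obtain ⟨o, hoQ, hoMin⟩ := Finset.exists_min_image (Qn l P) (vl l) hQne
    have hxle : x ≤ vl l o := hmin o hoQ hoMin
    refine ⟨hPr', by rwa [hsm], fun _ => ?_⟩
    refine ⟨?_, ?_, ?_, ?_⟩
    · intro j hj
      rcases mem_Cix_app.mp hj with hj | ⟨rfl, hTx'⟩
      · exact hTsub hj
      · exact absurd hTx' hTx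
    · intro i hi; rw [hvst i hi]; exact htype i hi
    · rw [hQstable P (Finset.Subset.refl P)]
      have h2le : 2 ≤ (Cix isN (l ++ [x])).card := by
        calc 2 = (Qn l P).card := hc2.symm
        _ ≤ (Cix isN l).card := Finset.card_le_card hQCN
        _ ≤ (Cix isN (l ++ [x])).card :=
            Finset.card_le_card (fun j hj => mem_Cix_app.mpr (Or.inl hj))
      omega
    · intro j hj hjP i hi
      rw [hQstable P (Finset.Subset.refl P)] at hi
      rw [hvst i (hQsub hi)]
      rcases mem_Cix_app.mp hj with hj | ⟨rfl, _⟩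
      · rw [vl_app (mem_Cix.mp hj).1 x]
        exact hmax j hj hjP i hi
      · rw [hvk]
        exact le_trans hxle (hoMin i hi)
  · -- large : ignore
    obtain ⟨hTsub, htype, hcard, hmax⟩ := hact hfr
    have hCN' : Cix isN (l ++ [x]) = Cix isN l := by
      ext j
      rw [mem_Cix_app]
      constructor
      · rintro (hj | ⟨rfl, hNx'⟩)
        · exact hj
        · exact absurd hNx' hNx
      · exact Or.inl
    refine ⟨hPr', by rwa [hsm], fun _ => ?_⟩
    refine ⟨?_, ?_, ?_, ?_⟩
    · intro j hj
      rcases mem_Cix_app.mp hj with hj | ⟨rfl, hTx'⟩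
      · exact hTsub hj
      · exact absurd hTx' hTx
    · intro i hi; rw [hvst i hi]; exact htype i hi
    · rw [hQstable P (Finset.Subset.refl P), hCN']; exact hcard
    · intro j hj hjP i hi
      rw [hQstable P (Finset.Subset.refl P)] at hi
      rw [hvst i (hQsub hi)]
      rw [hCN'] at hj
      rw [vl_app (mem_Cix.mp hj).1 x]
      exact hmax j hj hjP i hi

/-! ### assembly -/

lemma pk_inv {st : Step} {Inv : List ℝ → Finset ℕ → Prop} (h0 : Inv [] ∅)
    (hstep : ∀ l P x, ValidInstance (l ++ [x]) → Inv l P → Inv (l ++ [x]) (st l P x)) :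
    ∀ l, ValidInstance l → Inv l (pk st l) := by
  intro l
  induction l using List.reverseRecOn with
  | nil => intro _; rw [pk_nil]; exact h0
  | append_singleton t x ih =>
      intro hv
      rw [pk_app]
      exact hstep t _ x hv (ih (Vd_app hv).1)

lemma inv1_pk : ∀ l, ValidInstance l → Inv1 l (pk st1 l) :=
  pk_inv inv1_nil (fun _ _ _ => inv1_step)

lemma inv2_pk : ∀ l, ValidInstance l → Inv2 l (pk st2 l) :=
  pk_inv inv2_nil (fun _ _ _ => inv2_step)

lemma inv3_pk : ∀ l, ValidInstance l → Inv3 l (pk st3 l) :=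
  pk_inv inv3_nil (fun _ _ _ => inv3_step)

lemma inv4_pk : ∀ l, ValidInstance l → Inv4 l (pk st4 l) :=
  pk_inv inv4_nil (fun _ _ _ => inv4_step)

/-- the two-largest property mirrored -/
lemma mirror_max {l : List ℝ} {P Q : Finset ℕ}
    (hQ : Q = Qn l P)
    (hsub : Q ⊆ Cix isN l)
    (hmax : ∀ j ∈ Cix isN l, j ∉ P → ∀ i ∈ Q, vl l j ≤ vl l i)
    (htype : ∀ j ∈ Cix isN l, j ∈ P → j ∈ Q)
    (hcard : Q.card = 2) :
    ∀ i ∈ Cix isN l, ∀ j ∈ Cix isN l, i ≠ j → vl l i + vl l j ≤ sm l Q := by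
  have hmax' : ∀ j ∈ Cix isN l, j ∉ Q → ∀ i ∈ Q, vl l j ≤ vl l i := by
    intro j hj hjQ i hi
    by_cases hjP : j ∈ P
    · exact absurd (htype j hj hjP) hjQ
    · exact hmax j hj hjP i hi
  obtain ⟨a, b, hab, hQab⟩ := Finset.card_eq_two.mp hcard
  have hsm : sm l Q = vl l a + vl l b := by
    rw [hQab, sm, Finset.sum_insert (by simp [hab]), Finset.sum_singleton]
  intro i hi j hj hij
  rw [hsm]
  have ha : a ∈ Q := by rw [hQab]; simp
  have hb : b ∈ Q := by rw [hQab]; simp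
  by_cases hiQ : i ∈ Q <;> by_cases hjQ : j ∈ Q
  · rw [hQab] at hiQ hjQ
    simp at hiQ hjQ
    rcases hiQ with rfl | rfl <;> rcases hjQ with rfl | rfl <;>
      first | omega | linarith
  · have h1 := hmax' j hj hjQ a ha
    have h2 := hmax' j hj hjQ b hb
    rw [hQab] at hiQ; simp at hiQ
    rcases hiQ with rfl | rfl <;> linarith
  · have h1 := hmax' i hi hiQ a ha
    have h2 := hmax' i hi hiQ b hb
    rw [hQab] at hjQ; simp at hjQ
    rcases hjQ with rfl | rfl <;> linarith
  · have h1 := hmax' i hi hiQ a ha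
    have h2 := hmax' j hj hjQ b hb
    linarith

lemma sort3 (i j k : ℕ) (h1 : i ≠ j) (h2 : i ≠ k) (h3 : j ≠ k) :
    ∃ a b c : ℕ, a < b ∧ b < c ∧ ({a, b, c} : Finset ℕ) = {i, j, k} := by
  by_cases hij : i < j <;> by_cases hik : i < k <;> by_cases hjk : j < k
  · exact ⟨i, j, k, hij, hjk, rfl⟩
  · exact ⟨i, k, j, hik, by omega, by ext a; simp; tauto⟩
  · omega
  · exact ⟨k, i, j, by omega, hij, by ext a; simp; tauto⟩
  · exact ⟨j, i, k, by omega, hik, by ext a; simp; tauto⟩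
  · omega
  · exact ⟨j, k, i, hjk, by omega, by ext a; simp; tauto⟩
  · exact ⟨k, j, i, by omega, by omega, by ext a; simp; tauto⟩

lemma sm_pair {l : List ℝ} {i j : ℕ} (h : i ≠ j) : sm l {i, j} = vl l i + vl l j := by
  rw [sm, Finset.sum_insert (by simp [h]), Finset.sum_singleton]

lemma sm_split (l : List ℝ) (P : Finset ℕ) (p : ℕ → Prop) :
    sm l (P.filter p) + sm l (P \ P.filter p) = sm l P := by
  have h1 : P \ P.filter p = P.filter (fun i => ¬ p i) := by
    rw [Finset.filter_not]
  rw [h1, sm, sm, sm]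
  exact Finset.sum_filter_add_sum_filter_not P _ (vl l)

lemma key (l : List ℝ) (hv : ValidInstance l) :
    OPT l ≤ 4/3 * max (max (sm l (pk st1 l)) (sm l (pk st2 l)))
      (max (sm l (pk st3 l)) (sm l (pk st4 l))) := by
  set P1 := pk st1 l with hP1
  set P2 := pk st2 l with hP2
  set P3 := pk st3 l with hP3
  set P4 := pk st4 l with hP4
  set M := max (max (sm l P1) (sm l P2)) (max (sm l P3) (sm l P4)) with hM
  have hm1 : sm l P1 ≤ M := le_trans (le_max_left _ _) (le_max_left _ _)
  have hm2 : sm l P2 ≤ M := le_trans (le_max_right _ _) (le_max_left _ _)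
  have hm3 : sm l P3 ≤ M := le_trans (le_max_left _ _) (le_max_right _ _)
  have hm4 : sm l P4 ≤ M := le_trans (le_max_right _ _) (le_max_right _ _)
  -- the optimum
  obtain ⟨Pstar, hPmem, hPeq⟩ := Finset.exists_mem_eq_sup'
    (⟨∅, by simp⟩ : ((Finset.range l.length).powerset.filter
      fun P => (∑ i ∈ P, l.getD i 0) ≤ 1).Nonempty) (fun P => ∑ i ∈ P, l.getD i 0)
  have hOeq : OPT l = sm l Pstar := hPeq
  obtain ⟨hpow, hle1⟩ := Finset.mem_filter.mp hPmem
  have hPsub : Pstar ⊆ range l.length := Finset.mem_powerset.mp hpow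
  have hPsum : sm l Pstar ≤ 1 := hle1
  have hO1 : OPT l ≤ 1 := by rw [hOeq]; exact hPsum
  have hO0 : 0 ≤ OPT l := by rw [hOeq]; exact sm_nonneg hv _
  -- frozen dispatch
  by_cases hf1 : 3/4 ≤ sm l P1
  · linarith
  by_cases hf2 : 3/4 ≤ sm l P2
  · linarith
  by_cases hf3 : 3/4 ≤ sm l P3
  · linarith
  by_cases hf4 : 3/4 ≤ sm l P4
  · linarith
  push_neg at hf1 hf2 hf3 hf4
  obtain ⟨hsub1, hcap1, hact1⟩ := inv1_pk l hv
  obtain ⟨hsub2, hcap2, hact2⟩ := inv2_pk l hv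
  obtain ⟨hsub3, hcap3, hact3⟩ := inv3_pk l hv
  obtain ⟨hsub4, hcap4, hact4⟩ := inv4_pk l hv
  obtain ⟨hPN1, hmin1, hcard1, htrip1, hpairNL⟩ := hact1 hf1
  obtain ⟨hT2, hty2, hcard2, hmax2⟩ := hact2 hf2
  obtain ⟨hPL3, hmin3, hcard3, hpairLN⟩ := hact3 hf3
  obtain ⟨hT4, hty4, hmax4⟩ := hact4 hf4
  -- decompose the optimum
  set B := Pstar.filter (fun i => 1/4 < vl l i) with hB
  have hBsub : B ⊆ Pstar := Finset.filter_subset _ _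
  have hsplitB : sm l B + sm l (Pstar \ B) = sm l Pstar := sm_split l Pstar _
  have hrest0 : 0 ≤ sm l (Pstar \ B) := sm_nonneg hv _
  have hB0 : 0 ≤ sm l B := sm_nonneg hv _
  have hTub : sm l (Pstar \ B) ≤ sm l (Cix isT l) := by
    apply sm_mono hv
    intro i hi
    obtain ⟨hiP, hiB⟩ := Finset.mem_sdiff.mp hi
    refine mem_Cix.mpr ⟨mem_range.mp (hPsub hiP), ?_⟩
    by_contra hnt
    exact hiB (Finset.mem_filter.mpr ⟨hiP, by simp [isT] at hnt; linarith⟩)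
  have hTP2 : sm l (Cix isT l) ≤ sm l P2 := sm_mono hv hT2
  have hBval : ∀ i ∈ B, 1/4 < vl l i ∧ vl l i ≤ 1 := by
    intro i hi
    exact ⟨(Finset.mem_filter.mp hi).2, vl_le_one hv (mem_range.mp (hPsub (hBsub hi)))⟩
  have hBle : sm l B ≤ 1 := by linarith
  have hcardB : B.card ≤ 3 := by
    by_contra hc
    push_neg at hc
    have hne : B.Nonempty := Finset.card_pos.mp (by omega)
    have hlt := Finset.sum_lt_sum_of_nonempty hne (f := fun _ => (1/4 : ℝ))
      (fun i hi => (hBval i hi).1)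
    rw [Finset.sum_const] at hlt
    have h4 : (4 : ℕ) ≤ B.card := hc
    have : (1 : ℝ) ≤ B.card • (1/4 : ℝ) := by
      rw [nsmul_eq_mul]
      have : (4 : ℝ) ≤ (B.card : ℝ) := by exact_mod_cast h4
      linarith
    have : (1 : ℝ) < sm l B := by rw [sm]; linarith
    linarith
  -- helper for the single-N-item bound
  have hsingleN : ∀ i ∈ Cix isN l, vl l i + sm l (Cix isT l) ≤ sm l P2 := by
    intro i hiN
    have hQvals : ∀ q ∈ Qn l P2, isN (vl l q) := fun q hq => (Finset.mem_filter.mp hq).2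
    have hq : ∃ q ∈ Qn l P2, vl l i ≤ vl l q := by
      by_cases hiP2 : i ∈ P2
      · exact ⟨i, Finset.mem_filter.mpr ⟨hiP2, (mem_Cix.mp hiN).2⟩, le_refl _⟩
      · have hQne : (Qn l P2).Nonempty := by
          apply Finset.card_pos.mp
          have h9 : 1 ≤ (Cix isN l).card := Finset.card_pos.mpr ⟨i, hiN⟩
          rw [hcard2]
          omega
        obtain ⟨q, hqQ⟩ := hQne
        exact ⟨q, hqQ, hmax2 i hiN hiP2 q hqQ⟩
    obtain ⟨q, hqQ, hqle⟩ := hq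
    have hqP2 : q ∈ P2 := Finset.filter_subset _ _ hqQ
    have hqT : q ∉ Cix isT l := by
      intro hqT
      have h1 := (mem_Cix.mp hqT).2
      have h2 := (hQvals q hqQ).1
      simp [isT] at h1
      linarith
    calc vl l i + sm l (Cix isT l) ≤ vl l q + sm l (Cix isT l) := by linarith
    _ = sm l (insert q (Cix isT l)) := (sm_insert hqT).symm
    _ ≤ sm l P2 := sm_mono hv (Finset.insert_subset hqP2 hT2)
  -- helper for the single-L-item bound
  have hsingleL : ∀ i ∈ Cix isL l, vl l i + sm l (Cix isT l) ≤ sm l P4 := by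
    intro i hiL
    obtain ⟨q, hqP4, hqL, hqge⟩ := hmax4 i hiL
    have hqT : q ∉ Cix isT l := by
      intro hqT
      have h1 := (mem_Cix.mp hqT).2
      simp [isT] at h1
      simp [isL] at hqL
      linarith
    calc vl l i + sm l (Cix isT l) ≤ vl l q + sm l (Cix isT l) := by linarith
    _ = sm l (insert q (Cix isT l)) := (sm_insert hqT).symm
    _ ≤ sm l P4 := sm_mono hv (Finset.insert_subset hqP4 hT4)
  have hTP4 : sm l (Cix isT l) ≤ sm l P4 := sm_mono hv hT4
  -- case analysis on the number of big items in the optimum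
  have hcases : B.card = 0 ∨ B.card = 1 ∨ B.card = 2 ∨ B.card = 3 := by omega
  rcases hcases with hc | hc | hc | hc
  · -- no big item
    have hBe : B = ∅ := Finset.card_eq_zero.mp hc
    have : sm l B = 0 := by rw [hBe, sm, Finset.sum_empty]
    have : OPT l ≤ sm l P2 := by rw [hOeq]; linarith
    linarith
  · -- one big item
    obtain ⟨i, hBi⟩ := Finset.card_eq_one.mp hc
    have hiB : i ∈ B := by rw [hBi]; simp
    have hsmB : sm l B = vl l i := by rw [hBi, sm, Finset.sum_singleton]
    obtain ⟨hia, hib⟩ := hBval i hiB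
    have hilen : i < l.length := mem_range.mp (hPsub (hBsub hiB))
    by_cases hiN : vl l i ≤ 1/2
    · have := hsingleN i (mem_Cix.mpr ⟨hilen, ⟨hia, hiN⟩⟩)
      have : OPT l ≤ sm l P2 := by rw [hOeq]; linarith
      linarith
    · push_neg at hiN
      have := hsingleL i (mem_Cix.mpr ⟨hilen, hiN⟩)
      have : OPT l ≤ sm l P4 := by rw [hOeq]; linarith
      have h04 : 0 ≤ sm l P4 := sm_nonneg hv _
      linarith
  · -- two big items
    obtain ⟨i, j, hij, hBij⟩ := Finset.card_eq_two.mp hc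
    have hiB : i ∈ B := by rw [hBij]; simp
    have hjB : j ∈ B := by rw [hBij]; simp
    have hsmB : sm l B = vl l i + vl l j := by rw [hBij]; exact sm_pair hij
    obtain ⟨hia, hib⟩ := hBval i hiB
    obtain ⟨hja, hjb⟩ := hBval j hjB
    have hilen : i < l.length := mem_range.mp (hPsub (hBsub hiB))
    have hjlen : j < l.length := mem_range.mp (hPsub (hBsub hjB))
    have habsum : vl l i + vl l j ≤ 1 := by linarith
    -- neither can be large
    have hnotL : ∀ a b : ℕ, a ∈ B → b ∈ B → a ≠ b → vl l a + vl l b ≤ 1 →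
        ¬ (1/2 < vl l a) := by
      intro a b haB hbB hab hsum haL
      have hbN : isN (vl l b) := ⟨(hBval b hbB).1, by linarith⟩
      have haL' : isL (vl l a) := haL
      rcases Nat.lt_or_ge a b with h | h
      · have := hpairLN a b h haL' hbN
        linarith
      · have hba : b < a := by omega
        have := hpairNL b a hba hbN haL'
        linarith
    have hiN : vl l i ≤ 1/2 := by
      by_contra hcon
      push_neg at hcon
      exact hnotL i j hiB hjB hij habsum hcon
    have hjN : vl l j ≤ 1/2 := by
      by_contra hcon
      push_neg at hcon
      exact hnotL j i hjB hiB (Ne.symm hij) (by linarith) hcon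
    -- both are normal: use the two-largest guarantee of A2
    have hiCN : i ∈ Cix isN l := mem_Cix.mpr ⟨hilen, ⟨hia, hiN⟩⟩
    have hjCN : j ∈ Cix isN l := mem_Cix.mpr ⟨hjlen, ⟨hja, hjN⟩⟩
    have hNcard : 2 ≤ (Cix isN l).card := Finset.one_lt_card.mpr ⟨i, hiCN, j, hjCN, hij⟩
    have hQc2 : (Qn l P2).card = 2 := by rw [hcard2]; omega
    have hQsubN : Qn l P2 ⊆ Cix isN l := fun q hq => mem_Cix.mpr
      ⟨mem_range.mp (hsub2 (Finset.filter_subset _ _ hq)), (Finset.mem_filter.mp hq).2⟩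
    have hmm := mirror_max rfl hQsubN hmax2
      (fun a ha haP => Finset.mem_filter.mpr ⟨haP, (mem_Cix.mp ha).2⟩) hQc2
      i hiCN j hjCN hij
    have hQdisj : ∀ q ∈ Qn l P2, q ∉ Cix isT l := by
      intro q hq hqT
      have h1 := (mem_Cix.mp hqT).2
      have h2 := (Finset.mem_filter.mp hq).2.1
      simp [isT] at h1
      linarith
    have hsum2 : sm l (Qn l P2) + sm l (Cix isT l) = sm l (Qn l P2 ∪ Cix isT l) := by
      rw [sm, sm, sm, ← Finset.sum_union (Finset.disjoint_left.mpr hQdisj)]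
    have hsubU : Qn l P2 ∪ Cix isT l ⊆ P2 :=
      Finset.union_subset (Finset.filter_subset _ _) hT2
    have : sm l (Qn l P2 ∪ Cix isT l) ≤ sm l P2 := sm_mono hv hsubU
    have : OPT l ≤ sm l P2 := by rw [hOeq]; linarith
    linarith
  · -- three big items : impossible when A1 is not frozen
    exfalso
    obtain ⟨i, j, k, hij, hik, hjk, hBijk⟩ := Finset.card_eq_three.mp hc
    obtain ⟨a, b, c, hab, hbc, habc⟩ := sort3 i j k hij hik hjk
    have haB : a ∈ B := by rw [hBijk, ← habc]; simp
    have hbB : b ∈ B := by rw [hBijk, ← habc]; simp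
    have hcB : c ∈ B := by rw [hBijk, ← habc]; simp
    have hsmB : sm l B = vl l a + vl l b + vl l c := by
      rw [hBijk, ← habc, sm, Finset.sum_insert (by simp; omega),
        Finset.sum_insert (by simp; omega), Finset.sum_singleton]
      ring
    obtain ⟨ha1, ha2⟩ := hBval a haB
    obtain ⟨hb1, hb2⟩ := hBval b hbB
    obtain ⟨hc1, hc2⟩ := hBval c hcB
    have haN : isN (vl l a) := ⟨ha1, by linarith⟩
    have hbN : isN (vl l b) := ⟨hb1, by linarith⟩
    have hcN : isN (vl l c) := ⟨hc1, by linarith⟩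
    have := htrip1 a b c hab hbc haN hbN hcN
    linarith

noncomputable def Alg1 : OnlineAlg where
  pack := pk st1
  pack_subset := fun l hv => (inv1_pk l hv).1
  pack_capacity := fun l hv => (inv1_pk l hv).2.1
  pack_online := fun l x _ => by rw [pk_app]; exact st1_sub l (pk st1 l) x

noncomputable def Alg2 : OnlineAlg where
  pack := pk st2
  pack_subset := fun l hv => (inv2_pk l hv).1
  pack_capacity := fun l hv => (inv2_pk l hv).2.1
  pack_online := fun l x _ => by rw [pk_app]; exact st2_sub l (pk st2 l) x

noncomputable def Alg3 : OnlineAlg where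
  pack := pk st3
  pack_subset := fun l hv => (inv3_pk l hv).1
  pack_capacity := fun l hv => (inv3_pk l hv).2.1
  pack_online := fun l x _ => by rw [pk_app]; exact st3_sub l (pk st3 l) x

noncomputable def Alg4 : OnlineAlg where
  pack := pk st4
  pack_subset := fun l hv => (inv4_pk l hv).1
  pack_capacity := fun l hv => (inv4_pk l hv).2.1
  pack_online := fun l x _ => by rw [pk_app]; exact st4_sub l (pk st4 l) x

end
end RK

/-- There is a strictly `4/3`-competitive online algorithm for the proportional
removable knapsack problem reading two advice bits, i.e. four deterministic
online algorithms the best of which is always within a factor `4/3` of optimal. -/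
theorem remKnap_two_advice_bits_four_thirds_competitive :
    ∃ A₁ A₂ A₃ A₄ : OnlineAlg, ∀ l : List ℝ, ValidInstance l →
      OPT l ≤ (4 / 3) *
        max (max (gain A₁ l) (gain A₂ l)) (max (gain A₃ l) (gain A₄ l)) := by
  refine ⟨RK.Alg1, RK.Alg2, RK.Alg3, RK.Alg4, fun l hv => ?_⟩
  simpa only [gain, RK.Alg1, RK.Alg2, RK.Alg3, RK.Alg4, RK.sm, RK.vl] using RK.key l hv
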